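/- The 18 maps N_{i,1} := T_i, N_{i,2} := (λ_{i+2} − λ_{i+1})·T_i, N_{i,3} := (λ_{i+2} − λ_{i+1})²·T_i, B_{i,1} := λ_i·T_i, B_{i,2} := λ_i λ_{i+1}·T_i, B_{i,3} := λ_i λ_{i+2}·T_i (i = 1,2,3, indices modulo 3) form a basis of the real vector space of all maps ℝ² → 𝕊 whose entries are polynomials of total degree at most 2. -/

import Mathlib

open Matrix

noncomputable section

/-- `n i` is the outward unit normal on the edge `e_i = [x_{i+1}, x_{i+2}]`. -/
def IsOuterNormal (x n : Fin 3 → Fin 2 → ℝ) : Prop :=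
  ∀ i : Fin 3, n i ⬝ᵥ n i = 1 ∧ n i ⬝ᵥ (x (i + 2) - x (i + 1)) = 0 ∧
    0 < n i ⬝ᵥ (x (i + 1) - x i)

/-- A real-valued function on the plane given by a polynomial of total degree at most 2. -/
def IsPolyDeg2 (f : (Fin 2 → ℝ) → ℝ) : Prop :=
  ∃ p : MvPolynomial (Fin 2) ℝ, p.totalDegree ≤ 2 ∧ ∀ y, f y = MvPolynomial.eval y p

/-- Membership in the space `P²(T; 𝕊)` of symmetric-matrix-valued maps whose entries
are polynomials of total degree at most 2. -/
def MemP2S (τ : (Fin 2 → ℝ) → Matrix (Fin 2) (Fin 2) ℝ) : Prop :=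
  (∀ y, (τ y)ᵀ = τ y) ∧ (∀ k l : Fin 2, IsPolyDeg2 fun y => τ y k l)

/-- The symmetric part `sym(A) = (A + Aᵀ)/2`. -/
def symPart (A : Matrix (Fin 2) (Fin 2) ℝ) : Matrix (Fin 2) (Fin 2) ℝ :=
  (1 / 2 : ℝ) • (A + Aᵀ)

/-- `T_i = sym(t_{i+1} t_{i+2}ᵀ) / ((n_i·t_{i+1})(n_i·t_{i+2}))`. -/
def TT (t n : Fin 3 → Fin 2 → ℝ) (i : Fin 3) : Matrix (Fin 2) (Fin 2) ℝ :=
  ((n i ⬝ᵥ t (i + 1)) * (n i ⬝ᵥ t (i + 2)))⁻¹ • symPart (vecMulVec (t (i + 1)) (t (i + 2)))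

/-- The eighteen maps `N_{i,1}, N_{i,2}, N_{i,3}, B_{i,1}, B_{i,2}, B_{i,3}` (`i = 0,1,2`),
indexed by `Fin 3 × Fin 6` (second component: `0 ↦ N_{i,1}`, `1 ↦ N_{i,2}`, `2 ↦ N_{i,3}`,
`3 ↦ B_{i,1}`, `4 ↦ B_{i,2}`, `5 ↦ B_{i,3}`). -/
def famP2 (lam : Fin 3 → (Fin 2 → ℝ) → ℝ) (t n : Fin 3 → Fin 2 → ℝ) :
    Fin 3 × Fin 6 → (Fin 2 → ℝ) → Matrix (Fin 2) (Fin 2) ℝ := fun p y =>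
  if p.2 = 0 then TT t n p.1
  else if p.2 = 1 then (lam (p.1 + 2) y - lam (p.1 + 1) y) • TT t n p.1
  else if p.2 = 2 then (lam (p.1 + 2) y - lam (p.1 + 1) y) ^ 2 • TT t n p.1
  else if p.2 = 3 then lam p.1 y • TT t n p.1
  else if p.2 = 4 then (lam p.1 y * lam (p.1 + 1) y) • TT t n p.1
  else (lam p.1 y * lam (p.1 + 2) y) • TT t n p.1


section aux
variable {x t n : Fin 3 → Fin 2 → ℝ}

lemma det_ne (hx : AffineIndependent ℝ x) :
    (x 1 0 - x 0 0) * (x 2 1 - x 0 1) - (x 1 1 - x 0 1) * (x 2 0 - x 0 0) ≠ 0 := by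
  intro hdet
  by_cases h1 : x 1 0 - x 0 0 = 0 ∧ x 1 1 - x 0 1 = 0
  · have hw := hx.eq_zero_of_sum_eq_zero (w := ![(-1 : ℝ), 1, 0]) (s := Finset.univ)
      (by simp [Fin.sum_univ_three]) ?_ 1 (Finset.mem_univ _)
    · simp at hw
    · funext k
      simp [Fin.sum_univ_three]
      fin_cases k <;> simp <;> linarith [h1.1, h1.2]
  · have hd1 : (x 1 0 - x 0 0) ^ 2 + (x 1 1 - x 0 1) ^ 2 ≠ 0 := by
      rcases not_and_or.mp h1 with h | h <;> positivity
    set tt : ℝ := ((x 1 0 - x 0 0) * (x 2 0 - x 0 0) + (x 1 1 - x 0 1) * (x 2 1 - x 0 1)) /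
      ((x 1 0 - x 0 0) ^ 2 + (x 1 1 - x 0 1) ^ 2) with htt
    have hw := hx.eq_zero_of_sum_eq_zero (w := ![tt - 1, -tt, 1]) (s := Finset.univ)
      (by simp [Fin.sum_univ_three]; ring) ?_ 2 (Finset.mem_univ _)
    · simp at hw
    · funext k
      simp [Fin.sum_univ_three]
      have hk0 : x 2 0 - x 0 0 = tt * (x 1 0 - x 0 0) := by
        rw [htt, div_mul_eq_mul_div, eq_comm, div_eq_iff hd1]
        linear_combination (x 1 1 - x 0 1) * hdet
      have hk1 : x 2 1 - x 0 1 = tt * (x 1 1 - x 0 1) := by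
        rw [htt, div_mul_eq_mul_div, eq_comm, div_eq_iff hd1]
        linear_combination (-(x 1 0 - x 0 0)) * hdet
      fin_cases k <;> simp <;> nlinarith [hk0, hk1]

lemma perp_eq_zero (hx : AffineIndependent ℝ x) (w : Fin 2 → ℝ)
    (h1 : w ⬝ᵥ (x 1 - x 0) = 0) (h2 : w ⬝ᵥ (x 2 - x 0) = 0) : w = 0 := by
  have hd := det_ne hx
  simp only [dotProduct, Fin.sum_univ_two, Pi.sub_apply] at h1 h2
  have hw0 : w 0 = 0 := by
    have : w 0 * ((x 1 0 - x 0 0) * (x 2 1 - x 0 1) - (x 1 1 - x 0 1) * (x 2 0 - x 0 0)) = 0 := by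
      linear_combination (x 2 1 - x 0 1) * h1 - (x 1 1 - x 0 1) * h2
    exact (mul_eq_zero.mp this).resolve_right hd
  have hw1 : w 1 = 0 := by
    have : w 1 * ((x 1 0 - x 0 0) * (x 2 1 - x 0 1) - (x 1 1 - x 0 1) * (x 2 0 - x 0 0)) = 0 := by
      linear_combination (-(x 2 0 - x 0 0)) * h1 + (x 1 0 - x 0 0) * h2
    exact (mul_eq_zero.mp this).resolve_right hd
  funext k; fin_cases k <;> assumption

lemma affine_vanish (hx : AffineIndependent ℝ x) (g : Fin 2 → ℝ) (c : ℝ)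
    (h : ∀ i, g ⬝ᵥ x i + c = 0) : g = 0 ∧ c = 0 := by
  have hg : g = 0 := by
    apply perp_eq_zero hx g <;> rw [dotProduct_sub] <;> · linarith [h 0, h 1, h 2]
  refine ⟨hg, ?_⟩
  have := h 0
  rw [hg, zero_dotProduct, zero_add] at this
  exact this

lemma perp_edges (hx : AffineIndependent ℝ x) (i j : Fin 3) (hij : i ≠ j) (w : Fin 2 → ℝ)
    (h1 : w ⬝ᵥ (x (i + 2) - x (i + 1)) = 0) (h2 : w ⬝ᵥ (x (j + 2) - x (j + 1)) = 0) : w = 0 := by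
  apply perp_eq_zero hx w <;>
  · rw [dotProduct_sub]
    fin_cases i <;> fin_cases j <;> simp_all [dotProduct_sub] <;> linarith

end aux
section aux2
variable {x t n : Fin 3 → Fin 2 → ℝ}

lemma vert_ne (hx : AffineIndependent ℝ x) (i : Fin 3) : x (i + 2) ≠ x (i + 1) := by
  intro h
  have := hx.injective h
  fin_cases i <;> simp_all

lemma nt_perp (hx : AffineIndependent ℝ x) (hn : IsOuterNormal x n)
    (ht_par : ∀ i, ∃ c : ℝ, x (i + 2) - x (i + 1) = c • t i) (i : Fin 3) :
    n i ⬝ᵥ t i = 0 := by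
  obtain ⟨c, hc⟩ := ht_par i
  have hc0 : c ≠ 0 := by
    rintro rfl
    exact vert_ne hx i (by simpa [sub_eq_zero] using hc)
  have h := (hn i).2.1
  rw [hc, dotProduct_smul] at h
  simpa [hc0] using h
  
lemma n_ne_zero (hn : IsOuterNormal x n) (i : Fin 3) : n i ≠ 0 := by
  intro h
  have := (hn i).1
  rw [h] at this
  simp at this

lemma n_dot_t_ne (hx : AffineIndependent ℝ x) (hn : IsOuterNormal x n)
    (ht_par : ∀ i, ∃ c : ℝ, x (i + 2) - x (i + 1) = c • t i) (i j : Fin 3) (hij : i ≠ j) :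
    n i ⬝ᵥ t j ≠ 0 := by
  intro h0
  obtain ⟨c, hc⟩ := ht_par j
  apply n_ne_zero hn i
  apply perp_edges hx i j hij (n i) (hn i).2.1
  rw [hc, dotProduct_smul, h0, smul_zero]

lemma D_ne (hx : AffineIndependent ℝ x) (hn : IsOuterNormal x n) (i j : Fin 3) (hij : i ≠ j) :
    n i 0 * n j 1 - n i 1 * n j 0 ≠ 0 := by
  intro hD
  apply n_ne_zero hn j
  apply perp_edges hx i j hij (n j) ?_ (hn j).2.1
  have h1 := (hn i).1
  have h2 := (hn i).2.1
  simp only [dotProduct, Fin.sum_univ_two, Pi.sub_apply] at h1 h2 ⊢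
  linear_combination (n i 0 * (x (i+2) 1 - x (i+1) 1) - n i 1 * (x (i+2) 0 - x (i+1) 0)) * hD
    + (n i 0 * n j 0 + n i 1 * n j 1) * h2
    - (n j 0 * (x (i+2) 0 - x (i+1) 0) + n j 1 * (x (i+2) 1 - x (i+1) 1)) * h1

lemma quad_zero (hx : AffineIndependent ℝ x) (hn : IsOuterNormal x n)
    (A : Matrix (Fin 2) (Fin 2) ℝ) (hs : Aᵀ = A)
    (h : ∀ j, n j ⬝ᵥ A *ᵥ n j = 0) : A = 0 := by
  have hq : A 1 0 = A 0 1 := by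
    have := congrFun (congrFun hs 0) 1
    simpa [Matrix.transpose_apply] using this
  have h0 := h 0; have h1 := h 1; have h2 := h 2
  simp only [dotProduct, mulVec, Fin.sum_univ_two] at h0 h1 h2
  rw [hq] at h0 h1 h2
  have D01 := D_ne hx hn 0 1 (by decide)
  have D02 := D_ne hx hn 0 2 (by decide)
  have D12 := D_ne hx hn 1 2 (by decide)
  set a0 := n 0 0; set b0 := n 0 1; set a1 := n 1 0; set b1 := n 1 1
  set a2 := n 2 0; set b2 := n 2 1
  have hDD : (a0 * b1 - b0 * a1) * ((a0 * b2 - b0 * a2) * (a1 * b2 - b1 * a2)) ≠ 0 :=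
    mul_ne_zero D01 (mul_ne_zero D02 D12)
  have hp : A 0 0 = 0 := by
    have : A 0 0 * ((a0 * b1 - b0 * a1) * ((a0 * b2 - b0 * a2) * (a1 * b2 - b1 * a2))) = 0 := by
      linear_combination (b1 * b2 * (a1 * b2 - b1 * a2)) * h0
        - (b0 * b2 * (a0 * b2 - b0 * a2)) * h1 + (b0 * b1 * (a0 * b1 - b0 * a1)) * h2
    exact (mul_eq_zero.mp this).resolve_right hDD
  have hr : A 1 1 = 0 := by
    have : A 1 1 * ((a0 * b1 - b0 * a1) * ((a0 * b2 - b0 * a2) * (a1 * b2 - b1 * a2))) = 0 := by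
      linear_combination (a1 * a2 * (a1 * b2 - b1 * a2)) * h0
        - (a0 * a2 * (a0 * b2 - b0 * a2)) * h1 + (a0 * a1 * (a0 * b1 - b0 * a1)) * h2
    exact (mul_eq_zero.mp this).resolve_right hDD
  have hqq : A 0 1 = 0 := by
    have : A 0 1 * (2 * ((a0 * b1 - b0 * a1) * ((a0 * b2 - b0 * a2) * (a1 * b2 - b1 * a2)))) = 0 := by
      linear_combination (-((a1 * b2 - b1 * a2) * (a1 * b2 + a2 * b1))) * h0
        + ((a0 * b2 - b0 * a2) * (a0 * b2 + a2 * b0)) * h1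
        - ((a0 * b1 - b0 * a1) * (a0 * b1 + a1 * b0)) * h2
    have h2' : (2 : ℝ) * ((a0 * b1 - b0 * a1) * ((a0 * b2 - b0 * a2) * (a1 * b2 - b1 * a2))) ≠ 0 := by
      exact mul_ne_zero two_ne_zero hDD
    exact (mul_eq_zero.mp this).resolve_right h2'
  ext k l
  fin_cases k <;> fin_cases l <;> simp [hp, hr, hqq, hq]

end aux2
/-- The scalar factor functions. -/
def ffS (lam : Fin 3 → (Fin 2 → ℝ) → ℝ) (i : Fin 3) : Fin 6 → (Fin 2 → ℝ) → ℝ := fun j y =>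
  if j = 0 then 1
  else if j = 1 then lam (i + 2) y - lam (i + 1) y
  else if j = 2 then (lam (i + 2) y - lam (i + 1) y) ^ 2
  else if j = 3 then lam i y
  else if j = 4 then lam i y * lam (i + 1) y
  else lam i y * lam (i + 2) y

lemma famP2_eq (lam : Fin 3 → (Fin 2 → ℝ) → ℝ) (t n : Fin 3 → Fin 2 → ℝ)
    (p : Fin 3 × Fin 6) (y : Fin 2 → ℝ) :
    famP2 lam t n p y = ffS lam p.1 p.2 y • TT t n p.1 := by
  obtain ⟨i, j⟩ := p
  fin_cases j <;> simp [famP2, ffS]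

/-- the quadratic-form functional as a linear map -/
def ellL (v : Fin 2 → ℝ) : Matrix (Fin 2) (Fin 2) ℝ →ₗ[ℝ] ℝ where
  toFun A := v ⬝ᵥ A *ᵥ v
  map_add' A B := by simp [Matrix.add_mulVec, dotProduct_add]; ring
  map_smul' c A := by simp [Matrix.smul_mulVec, dotProduct_smul]; ring

lemma ellL_apply (v : Fin 2 → ℝ) (A : Matrix (Fin 2) (Fin 2) ℝ) : ellL v A = v ⬝ᵥ A *ᵥ v := rfl

lemma ellL_symPart_vecMulVec (u v w : Fin 2 → ℝ) :
    ellL w (symPart (vecMulVec u v)) = (w ⬝ᵥ u) * (w ⬝ᵥ v) := by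
  simp only [ellL_apply, symPart, vecMulVec, Matrix.smul_mulVec, dotProduct_smul,
    Matrix.add_mulVec, dotProduct_add, mulVec, dotProduct, Fin.sum_univ_two,
    Matrix.transpose_apply, Matrix.of_apply, Pi.add_apply, Pi.smul_apply, smul_eq_mul,
    Matrix.smul_apply, Matrix.add_apply]
  ring

lemma ellL_TT (hx : AffineIndependent ℝ x) (hn : IsOuterNormal x n)
    (ht_par : ∀ i, ∃ c : ℝ, x (i + 2) - x (i + 1) = c • t i) (i j : Fin 3) :
    ellL (n j) (TT t n i) = if i = j then 1 else 0 := by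
  rw [TT, _root_.map_smul, ellL_symPart_vecMulVec]
  rcases eq_or_ne i j with rfl | hij
  · rw [if_pos rfl]
    have h1 : n i ⬝ᵥ t (i + 1) ≠ 0 := n_dot_t_ne hx hn ht_par i (i + 1) (by fin_cases i <;> decide)
    have h2 : n i ⬝ᵥ t (i + 2) ≠ 0 := n_dot_t_ne hx hn ht_par i (i + 2) (by fin_cases i <;> decide)
    simp only [smul_eq_mul]
    exact inv_mul_cancel₀ (mul_ne_zero h1 h2)
  · rw [if_neg hij]
    have : j = i + 1 ∨ j = i + 2 := by fin_cases i <;> fin_cases j <;> simp_all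
    have hnt := nt_perp hx hn ht_par
    rcases this with rfl | rfl
    · rw [hnt (i + 1)]; simp
    · rw [hnt (i + 2)]; simp

lemma TT_symm (t n : Fin 3 → Fin 2 → ℝ) (i : Fin 3) : (TT t n i)ᵀ = TT t n i := by
  rw [TT, Matrix.transpose_smul, symPart, Matrix.transpose_smul, transpose_add,
    transpose_transpose]
  congr 1
  rw [add_comm]
section aux4
variable {x : Fin 3 → Fin 2 → ℝ} {lam : Fin 3 → (Fin 2 → ℝ) → ℝ}

lemma lam_sum_one (hx : AffineIndependent ℝ x)
    (hlam_affine : ∀ i, ∃ (g : Fin 2 → ℝ) (c : ℝ), ∀ y, lam i y = g ⬝ᵥ y + c)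
    (hlam_val : ∀ i j, lam i (x j) = if i = j then (1 : ℝ) else 0) :
    ∀ y, lam 0 y + lam 1 y + lam 2 y = 1 := by
  choose G C hGC using hlam_affine
  have expand : ∀ y, (G 0 + G 1 + G 2) ⬝ᵥ y + (C 0 + C 1 + C 2 - 1) =
      lam 0 y + lam 1 y + lam 2 y - 1 := by
    intro y
    rw [hGC 0 y, hGC 1 y, hGC 2 y]
    simp [add_dotProduct]
    ring
  obtain ⟨hg, hc⟩ := affine_vanish hx _ _ (fun i => by
    rw [expand (x i)]
    fin_cases i <;> simp [hlam_val])
  intro y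
  have := expand y
  rw [hg, hc] at this
  simp at this
  linarith

lemma coord_rep (hx : AffineIndependent ℝ x)
    (hlam_affine : ∀ i, ∃ (g : Fin 2 → ℝ) (c : ℝ), ∀ y, lam i y = g ⬝ᵥ y + c)
    (hlam_val : ∀ i j, lam i (x j) = if i = j then (1 : ℝ) else 0) (k : Fin 2) :
    ∀ y, y k = lam 0 y * x 0 k + lam 1 y * x 1 k + lam 2 y * x 2 k := by
  choose G C hGC using hlam_affine
  have expand : ∀ y, (x 0 k • G 0 + x 1 k • G 1 + x 2 k • G 2 - Pi.single k 1) ⬝ᵥ y +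
      (x 0 k * C 0 + x 1 k * C 1 + x 2 k * C 2) =
      lam 0 y * x 0 k + lam 1 y * x 1 k + lam 2 y * x 2 k - y k := by
    intro y
    rw [hGC 0 y, hGC 1 y, hGC 2 y]
    simp [add_dotProduct, sub_dotProduct, smul_dotProduct, single_dotProduct]
    ring
  obtain ⟨hg, hc⟩ := affine_vanish hx _ _ (fun i => by
    rw [expand (x i)]
    fin_cases i <;> simp [hlam_val])
  intro y
  have := expand y
  rw [hg, hc] at this
  simp at this
  linarith

lemma lam_midpoint
    (hlam_affine : ∀ i, ∃ (g : Fin 2 → ℝ) (c : ℝ), ∀ y, lam i y = g ⬝ᵥ y + c)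
    (u : Fin 3) (v w : Fin 2 → ℝ) :
    lam u ((2⁻¹ : ℝ) • (v + w)) = (lam u v + lam u w) / 2 := by
  obtain ⟨g, c, hg⟩ := hlam_affine u
  rw [hg, hg, hg, dotProduct_smul, dotProduct_add]
  simp
  ring

/-- affine real-valued functions on the plane -/
def IsAff (f : (Fin 2 → ℝ) → ℝ) : Prop := ∃ g c, ∀ y, f y = g ⬝ᵥ y + c

lemma isAff_one : IsAff (fun _ => (1 : ℝ)) := ⟨0, 1, by simp⟩

lemma isAff_lam (hlam_affine : ∀ i, ∃ (g : Fin 2 → ℝ) (c : ℝ), ∀ y, lam i y = g ⬝ᵥ y + c)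
    (u : Fin 3) : IsAff (lam u) := hlam_affine u

lemma isAff_sub {f g : (Fin 2 → ℝ) → ℝ} (hf : IsAff f) (hg : IsAff g) :
    IsAff (fun y => f y - g y) := by
  obtain ⟨a, b, ha⟩ := hf
  obtain ⟨a', b', ha'⟩ := hg
  exact ⟨a - a', b - b', fun y => by show f y - g y = _; rw [ha, ha', sub_dotProduct]; ring⟩

lemma IsAff.toPoly {f : (Fin 2 → ℝ) → ℝ} (h : IsAff f) :
    ∃ p : MvPolynomial (Fin 2) ℝ, p.totalDegree ≤ 1 ∧ ∀ y, f y = MvPolynomial.eval y p := by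
  obtain ⟨g, c, hg⟩ := h
  refine ⟨MvPolynomial.C c + ∑ k : Fin 2, MvPolynomial.C (g k) * MvPolynomial.X k, ?_, ?_⟩
  · refine le_trans (MvPolynomial.totalDegree_add _ _) (max_le (by simp) ?_)
    refine le_trans (MvPolynomial.totalDegree_finset_sum _ _) ?_
    refine Finset.sup_le fun k _ => le_trans (MvPolynomial.totalDegree_mul _ _) ?_
    simp [MvPolynomial.totalDegree_X]
  · intro y
    rw [hg]
    simp [dotProduct, Fin.sum_univ_two]
    ring

lemma isPoly2_helper (F f g : (Fin 2 → ℝ) → ℝ) (hf : IsAff f) (hg : IsAff g) (r : ℝ)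
    (hF : ∀ y, F y = f y * g y * r) : IsPolyDeg2 F := by
  obtain ⟨p, hp, hpe⟩ := hf.toPoly
  obtain ⟨q, hq, hqe⟩ := hg.toPoly
  refine ⟨p * q * MvPolynomial.C r, ?_, ?_⟩
  · refine le_trans (MvPolynomial.totalDegree_mul _ _) ?_
    have := MvPolynomial.totalDegree_mul p q
    simp only [MvPolynomial.totalDegree_C]
    omega
  · intro y
    rw [hF, hpe, hqe]
    simp

lemma IsPolyDeg2.add {f g : (Fin 2 → ℝ) → ℝ} (hf : IsPolyDeg2 f) (hg : IsPolyDeg2 g) :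
    IsPolyDeg2 (fun y => f y + g y) := by
  obtain ⟨p, hp, hpe⟩ := hf
  obtain ⟨q, hq, hqe⟩ := hg
  refine ⟨p + q, le_trans (MvPolynomial.totalDegree_add _ _) (max_le hp hq), fun y => by
    show f y + g y = _; rw [hpe, hqe]; simp⟩

lemma IsPolyDeg2.const_mul {f : (Fin 2 → ℝ) → ℝ} (hf : IsPolyDeg2 f) (r : ℝ) :
    IsPolyDeg2 (fun y => r * f y) := by
  obtain ⟨p, hp, hpe⟩ := hf
  refine ⟨MvPolynomial.C r * p, ?_, fun y => by show r * f y = _; rw [hpe]; simp⟩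
  refine le_trans (MvPolynomial.totalDegree_mul _ _) ?_
  simp only [MvPolynomial.totalDegree_C]
  omega

lemma isPolyDeg2_ffS_mul
    (hlam_affine : ∀ i, ∃ (g : Fin 2 → ℝ) (c : ℝ), ∀ y, lam i y = g ⬝ᵥ y + c)
    (i : Fin 3) (j : Fin 6) (r : ℝ) : IsPolyDeg2 (fun y => ffS lam i j y * r) := by
  have hl := isAff_lam hlam_affine
  have hd : IsAff (fun y => lam (i + 2) y - lam (i + 1) y) := isAff_sub (hl _) (hl _)
  fin_cases j
  · exact isPoly2_helper _ _ _ isAff_one isAff_one r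
      (fun y => by show (1:ℝ) * r = 1 * 1 * r; ring)
  · exact isPoly2_helper _ _ _ hd isAff_one r
      (fun y => by show (lam (i+2) y - lam (i+1) y) * r = (fun y => lam (i+2) y - lam (i+1) y) y * (fun _ => (1:ℝ)) y * r; ring)
  · exact isPoly2_helper _ _ _ hd hd r
      (fun y => by show (lam (i+2) y - lam (i+1) y) ^ 2 * r = (fun y => lam (i+2) y - lam (i+1) y) y * (fun y => lam (i+2) y - lam (i+1) y) y * r; ring)
  · exact isPoly2_helper _ _ _ (hl i) isAff_one r
      (fun y => by show lam i y * r = lam i y * 1 * r; ring)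
  · exact isPoly2_helper _ _ _ (hl i) (hl (i + 1)) r
      (fun y => rfl)
  · exact isPoly2_helper _ _ _ (hl i) (hl (i + 2)) r
      (fun y => rfl)

end aux4
section aux5
variable {x : Fin 3 → Fin 2 → ℝ} {lam : Fin 3 → (Fin 2 → ℝ) → ℝ}

lemma lam_sum_one' (hx : AffineIndependent ℝ x)
    (hlam_affine : ∀ i, ∃ (g : Fin 2 → ℝ) (c : ℝ), ∀ y, lam i y = g ⬝ᵥ y + c)
    (hlam_val : ∀ i j, lam i (x j) = if i = j then (1 : ℝ) else 0) (i : Fin 3) (y : Fin 2 → ℝ) :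
    lam i y + lam (i + 1) y + lam (i + 2) y = 1 := by
  have h := lam_sum_one hx hlam_affine hlam_val y
  fin_cases i
  · exact h
  · show lam 1 y + lam 2 y + lam 0 y = 1; linarith
  · show lam 2 y + lam 0 y + lam 1 y = 1; linarith

lemma mem_span_ffS (hx : AffineIndependent ℝ x)
    (hlam_affine : ∀ i, ∃ (g : Fin 2 → ℝ) (c : ℝ), ∀ y, lam i y = g ⬝ᵥ y + c)
    (hlam_val : ∀ i j, lam i (x j) = if i = j then (1 : ℝ) else 0) (i : Fin 3)
    (f : (Fin 2 → ℝ) → ℝ) (hf : IsPolyDeg2 f) :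
    f ∈ Submodule.span ℝ (Set.range (ffS lam i)) := by
  set S := Submodule.span ℝ (Set.range (ffS lam i)) with hS
  have gen : ∀ j : Fin 6, ffS lam i j ∈ S := fun j => Submodule.subset_span ⟨j, rfl⟩
  have hsum : ∀ y, lam i y + lam (i + 1) y + lam (i + 2) y = 1 :=
    lam_sum_one' hx hlam_affine hlam_val i
  have h1 : (fun _ => (1 : ℝ)) ∈ S := gen 0
  have hDm : (fun y => lam (i + 2) y - lam (i + 1) y) ∈ S := gen 1
  have hD2 : (fun y => (lam (i + 2) y - lam (i + 1) y) ^ 2) ∈ S := gen 2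
  have hA : lam i ∈ S := gen 3
  have hAB : (fun y => lam i y * lam (i + 1) y) ∈ S := gen 4
  have hAC : (fun y => lam i y * lam (i + 2) y) ∈ S := gen 5
  have hB : lam (i + 1) ∈ S := by
    have heq : lam (i + 1) = (2⁻¹ : ℝ) • (fun _ => (1 : ℝ)) - (2⁻¹ : ℝ) • lam i
        - (2⁻¹ : ℝ) • (fun y => lam (i + 2) y - lam (i + 1) y) := by
      funext y
      simp only [Pi.sub_apply, Pi.smul_apply, smul_eq_mul]
      linear_combination (2⁻¹ : ℝ) * hsum y
    rw [heq]
    exact sub_mem (sub_mem (S.smul_mem _ h1) (S.smul_mem _ hA)) (S.smul_mem _ hDm)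
  have hC : lam (i + 2) ∈ S := by
    have heq : lam (i + 2) = (fun y => lam (i + 2) y - lam (i + 1) y) + lam (i + 1) := by
      funext y; simp
    rw [heq]
    exact add_mem hDm hB
  have hAA : (fun y => lam i y * lam i y) ∈ S := by
    have heq : (fun y => lam i y * lam i y) = lam i - (fun y => lam i y * lam (i + 1) y)
        - (fun y => lam i y * lam (i + 2) y) := by
      funext y
      simp only [Pi.sub_apply]
      linear_combination (lam i y : ℝ) * hsum y
    rw [heq]
    exact sub_mem (sub_mem hA hAB) hAC
  have hBC : (fun y => lam (i + 1) y * lam (i + 2) y) ∈ S := by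
    have heq : (fun y => lam (i + 1) y * lam (i + 2) y) = (4⁻¹ : ℝ) • (fun _ => (1 : ℝ))
        - (4⁻¹ : ℝ) • lam i - (4⁻¹ : ℝ) • (fun y => lam i y * lam (i + 1) y)
        - (4⁻¹ : ℝ) • (fun y => lam i y * lam (i + 2) y)
        - (4⁻¹ : ℝ) • (fun y => (lam (i + 2) y - lam (i + 1) y) ^ 2) := by
      funext y
      simp only [Pi.sub_apply, Pi.smul_apply, smul_eq_mul]
      linear_combination ((lam (i + 1) y + lam (i + 2) y + 1) / 4 : ℝ) * hsum y
    rw [heq]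
    exact sub_mem (sub_mem (sub_mem (sub_mem (S.smul_mem _ h1) (S.smul_mem _ hA))
      (S.smul_mem _ hAB)) (S.smul_mem _ hAC)) (S.smul_mem _ hD2)
  have hBB : (fun y => lam (i + 1) y * lam (i + 1) y) ∈ S := by
    have heq : (fun y => lam (i + 1) y * lam (i + 1) y) = lam (i + 1)
        - (fun y => lam i y * lam (i + 1) y) - (fun y => lam (i + 1) y * lam (i + 2) y) := by
      funext y
      simp only [Pi.sub_apply]
      linear_combination (lam (i + 1) y : ℝ) * hsum y
    rw [heq]
    exact sub_mem (sub_mem hB hAB) hBC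
  have hCC : (fun y => lam (i + 2) y * lam (i + 2) y) ∈ S := by
    have heq : (fun y => lam (i + 2) y * lam (i + 2) y) = lam (i + 2)
        - (fun y => lam i y * lam (i + 2) y) - (fun y => lam (i + 1) y * lam (i + 2) y) := by
      funext y
      simp only [Pi.sub_apply]
      linear_combination (lam (i + 2) y : ℝ) * hsum y
    rw [heq]
    exact sub_mem (sub_mem hC hAC) hBC
  have comm : ∀ u v : Fin 3, (fun y => lam u y * lam v y) = (fun y => lam v y * lam u y) :=
    fun u v => funext fun y => mul_comm _ _
  have huniv : ∀ w u : Fin 3, u = w ∨ u = w + 1 ∨ u = w + 2 := by decide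
  have hprod : ∀ u v : Fin 3, (fun y => lam u y * lam v y) ∈ S := by
    intro u v
    rcases huniv i u with h | h | h <;> rcases huniv i v with h' | h' | h' <;> rw [h, h'] <;>
      first
        | exact hAA | exact hAB | exact hAC | exact hBB | exact hBC | exact hCC
        | (rw [comm]; first | exact hAB | exact hAC | exact hBC)
  have hlam : ∀ u : Fin 3, lam u ∈ S := by
    intro u
    rcases huniv i u with h | h | h <;> rw [h]
    · exact hA
    · exact hB
    · exact hC
  have hcoord : ∀ k : Fin 2, (fun (y : Fin 2 → ℝ) => y k) ∈ S := by
    intro k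
    have heq : (fun (y : Fin 2 → ℝ) => y k) = (x 0 k) • lam 0 + (x 1 k) • lam 1
        + (x 2 k) • lam 2 := by
      funext y
      simp only [Pi.add_apply, Pi.smul_apply, smul_eq_mul]
      rw [coord_rep hx hlam_affine hlam_val k y]
      ring
    rw [heq]
    exact add_mem (add_mem (S.smul_mem _ (hlam 0)) (S.smul_mem _ (hlam 1)))
      (S.smul_mem _ (hlam 2))
  have hcoord2 : ∀ k l : Fin 2, (fun (y : Fin 2 → ℝ) => y k * y l) ∈ S := by
    intro k l
    have heq : (fun (y : Fin 2 → ℝ) => y k * y l) =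
        ∑ u : Fin 3, ∑ v : Fin 3, (x u k * x v l) • (fun y => lam u y * lam v y) := by
      funext y
      simp only [Fin.sum_univ_three, Finset.sum_apply, Pi.add_apply, Pi.smul_apply, smul_eq_mul]
      rw [coord_rep hx hlam_affine hlam_val k y, coord_rep hx hlam_affine hlam_val l y]
      ring
    rw [heq]
    exact sum_mem fun u _ => sum_mem fun v _ => S.smul_mem _ (hprod u v)
  have hmono : ∀ m0 m1 : ℕ, m0 + m1 ≤ 2 →
      (fun (y : Fin 2 → ℝ) => y 0 ^ m0 * y 1 ^ m1) ∈ S := by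
    intro m0 m1 hm
    have e1 : m0 ≤ 2 := by omega
    have e2 : m1 ≤ 2 := by omega
    interval_cases m0 <;> interval_cases m1 <;> first
      | omega
      | (first
          | (have heq : (fun (y : Fin 2 → ℝ) => y 0 ^ 0 * y 1 ^ 0) = fun _ => (1:ℝ) := by
              funext y; ring
             rw [heq]; exact h1)
          | (have heq : (fun (y : Fin 2 → ℝ) => y 0 ^ 0 * y 1 ^ 1) = fun y => y 1 := by
              funext y; ring
             rw [heq]; exact hcoord 1)
          | (have heq : (fun (y : Fin 2 → ℝ) => y 0 ^ 0 * y 1 ^ 2) = fun y => y 1 * y 1 := by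
              funext y; ring
             rw [heq]; exact hcoord2 1 1)
          | (have heq : (fun (y : Fin 2 → ℝ) => y 0 ^ 1 * y 1 ^ 0) = fun y => y 0 := by
              funext y; ring
             rw [heq]; exact hcoord 0)
          | (have heq : (fun (y : Fin 2 → ℝ) => y 0 ^ 1 * y 1 ^ 1) = fun y => y 0 * y 1 := by
              funext y; ring
             rw [heq]; exact hcoord2 0 1)
          | (have heq : (fun (y : Fin 2 → ℝ) => y 0 ^ 2 * y 1 ^ 0) = fun y => y 0 * y 0 := by
              funext y; ring
             rw [heq]; exact hcoord2 0 0))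
  obtain ⟨p, hdeg, hrep⟩ := hf
  have hfeq : f = ∑ m ∈ p.support,
      (MvPolynomial.coeff m p) • (fun (y : Fin 2 → ℝ) => y 0 ^ m 0 * y 1 ^ m 1) := by
    funext y
    rw [hrep y, MvPolynomial.eval_eq']
    simp only [Finset.sum_apply, Pi.smul_apply, smul_eq_mul, Fin.prod_univ_two]
  rw [hfeq]
  refine sum_mem fun m hm => S.smul_mem _ (hmono (m 0) (m 1) ?_)
  have h := MvPolynomial.le_totalDegree hm
  have hms : (m.sum fun _ e => e) = m 0 + m 1 := by
    rw [Finsupp.sum_fintype _ _ (fun _ => rfl), Fin.sum_univ_two]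
  omega

end aux5
section aux6
variable {x : Fin 3 → Fin 2 → ℝ} {lam : Fin 3 → (Fin 2 → ℝ) → ℝ}

lemma ffS_indep (hx : AffineIndependent ℝ x)
    (hlam_affine : ∀ i, ∃ (g : Fin 2 → ℝ) (c : ℝ), ∀ y, lam i y = g ⬝ᵥ y + c)
    (hlam_val : ∀ i j, lam i (x j) = if i = j then (1 : ℝ) else 0) (i : Fin 3)
    (c : Fin 6 → ℝ) (h : ∀ y, ∑ j : Fin 6, c j * ffS lam i j y = 0) : ∀ j, c j = 0 := by
  have hne1 : i ≠ i + 1 := by fin_cases i <;> decide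
  have hne2 : i ≠ i + 2 := by fin_cases i <;> decide
  have hne3 : i + 1 ≠ i + 2 := by fin_cases i <;> decide
  have vAA : lam i (x i) = 1 := by rw [hlam_val]; simp
  have vBB : lam (i + 1) (x (i + 1)) = 1 := by rw [hlam_val]; simp
  have vCC : lam (i + 2) (x (i + 2)) = 1 := by rw [hlam_val]; simp
  have vAB : lam i (x (i + 1)) = 0 := by rw [hlam_val, if_neg hne1]
  have vAC : lam i (x (i + 2)) = 0 := by rw [hlam_val, if_neg hne2]
  have vBA : lam (i + 1) (x i) = 0 := by rw [hlam_val, if_neg (Ne.symm hne1)]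
  have vCA : lam (i + 2) (x i) = 0 := by rw [hlam_val, if_neg (Ne.symm hne2)]
  have vBC : lam (i + 1) (x (i + 2)) = 0 := by rw [hlam_val, if_neg hne3]
  have vCB : lam (i + 2) (x (i + 1)) = 0 := by rw [hlam_val, if_neg (Ne.symm hne3)]
  have mid := lam_midpoint (lam := lam) hlam_affine
  have eA := h (x i)
  have eB := h (x (i + 1))
  have eC := h (x (i + 2))
  have eM0 := h ((2⁻¹ : ℝ) • (x (i + 1) + x (i + 2)))
  have eM1 := h ((2⁻¹ : ℝ) • (x i + x (i + 1)))
  have eM2 := h ((2⁻¹ : ℝ) • (x i + x (i + 2)))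
  simp only [Fin.sum_univ_six, ffS, Fin.reduceEq, reduceIte] at eA eB eC eM0 eM1 eM2
  simp only [mid] at eM0 eM1 eM2
  norm_num [vAA, vBB, vCC, vAB, vAC, vBA, vCA, vBC, vCB] at eA eB eC eM0 eM1 eM2
  intro j
  fin_cases j <;> simp <;> linarith

end aux6
/-- The eighteen maps `N_{i,j}, B_{i,j}` form a basis of the space of all maps
`ℝ² → 𝕊` whose entries are polynomials of total degree at most 2. -/
theorem basis_P2S
    (x t n : Fin 3 → Fin 2 → ℝ)
    (hx : AffineIndependent ℝ x)
    (hn : IsOuterNormal x n)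
    (ht_unit : ∀ i, t i ⬝ᵥ t i = 1)
    (ht_par : ∀ i, ∃ c : ℝ, x (i + 2) - x (i + 1) = c • t i)
    (lam : Fin 3 → (Fin 2 → ℝ) → ℝ)
    (hlam_affine : ∀ i, ∃ (g : Fin 2 → ℝ) (c : ℝ), ∀ y, lam i y = g ⬝ᵥ y + c)
    (hlam_val : ∀ i j, lam i (x j) = if i = j then (1 : ℝ) else 0) :
    (∀ p : Fin 3 × Fin 6, MemP2S (famP2 lam t n p)) ∧
    LinearIndependent ℝ (famP2 lam t n) ∧
    (∀ τ : (Fin 2 → ℝ) → Matrix (Fin 2) (Fin 2) ℝ, MemP2S τ →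
      ∃ c : Fin 3 × Fin 6 → ℝ, τ = ∑ p : Fin 3 × Fin 6, c p • famP2 lam t n p) := by
  refine ⟨?_, ?_, ?_⟩
  · -- membership
    intro p
    constructor
    · intro y
      rw [famP2_eq, Matrix.transpose_smul, TT_symm]
    · intro k l
      have hrw : (fun y => famP2 lam t n p y k l)
          = fun y => ffS lam p.1 p.2 y * (TT t n p.1 k l) := by
        funext y
        rw [famP2_eq]
        simp [Matrix.smul_apply, smul_eq_mul]
      rw [hrw]
      exact isPolyDeg2_ffS_mul hlam_affine _ _ _
  · -- linear independence
    rw [Fintype.linearIndependent_iff]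
    intro c hc p
    obtain ⟨i, j⟩ := p
    apply ffS_indep hx hlam_affine hlam_val i (fun j => c (i, j)) ?_ j
    intro y
    have hy : ∑ q : Fin 3 × Fin 6, c q • famP2 lam t n q y = 0 := by
      have := congrFun hc y
      simpa [Finset.sum_apply] using this
    have h3 := congrArg (ellL (n i)) hy
    rw [map_sum, map_zero] at h3
    have h4 : ∀ q : Fin 3 × Fin 6, ellL (n i) (c q • famP2 lam t n q y)
        = if q.1 = i then c q * ffS lam q.1 q.2 y else 0 := by
      intro q
      rw [famP2_eq, _root_.map_smul, _root_.map_smul, ellL_TT hx hn ht_par q.1 i]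
      by_cases hq : q.1 = i <;> simp [hq] <;> ring
    rw [Finset.sum_congr rfl (fun q _ => h4 q), Fintype.sum_prod_type] at h3
    rw [Finset.sum_eq_single i (fun b _ hb => by simp [hb]) (fun h => absurd (Finset.mem_univ i) h)] at h3
    simpa using h3
  · -- spanning
    rintro τ ⟨hsymm, hpoly⟩
    have hgpoly : ∀ i : Fin 3, IsPolyDeg2 (fun y => ellL (n i) (τ y)) := by
      intro i
      have hrw : (fun y => ellL (n i) (τ y)) = fun y =>
          (n i 0 * n i 0) * τ y 0 0 + (n i 0 * n i 1) * τ y 0 1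
          + (n i 1 * n i 0) * τ y 1 0 + (n i 1 * n i 1) * τ y 1 1 := by
        funext y
        simp [ellL_apply, mulVec, dotProduct, Fin.sum_univ_two]
        ring
      rw [hrw]
      exact ((((hpoly 0 0).const_mul _).add ((hpoly 0 1).const_mul _)).add
        ((hpoly 1 0).const_mul _)).add ((hpoly 1 1).const_mul _)
    have hex : ∀ i : Fin 3, ∃ d : Fin 6 → ℝ,
        ∑ j : Fin 6, d j • ffS lam i j = (fun y => ellL (n i) (τ y)) :=
      fun i => (Submodule.mem_span_range_iff_exists_fun ℝ).mp
        (mem_span_ffS hx hlam_affine hlam_val i _ (hgpoly i))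
    choose d hd using hex
    refine ⟨fun p => d p.1 p.2, ?_⟩
    funext y
    have hre : (∑ p : Fin 3 × Fin 6, (fun p : Fin 3 × Fin 6 => d p.1 p.2) p • famP2 lam t n p) y
        = ∑ p : Fin 3 × Fin 6, d p.1 p.2 • famP2 lam t n p y := by
      simp [Finset.sum_apply]
    rw [hre]
    apply eq_of_sub_eq_zero
    apply quad_zero hx hn
    · -- symmetric
      rw [Matrix.transpose_sub, hsymm, Matrix.transpose_sum]
      congr 1
      apply Finset.sum_congr rfl
      intro q _
      rw [famP2_eq, Matrix.transpose_smul, Matrix.transpose_smul, TT_symm]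
    · intro j
      rw [← ellL_apply, map_sub, map_sum]
      have h4 : ∀ q : Fin 3 × Fin 6, ellL (n j) (d q.1 q.2 • famP2 lam t n q y)
          = if q.1 = j then d q.1 q.2 * ffS lam q.1 q.2 y else 0 := by
        intro q
        rw [famP2_eq, _root_.map_smul, _root_.map_smul, ellL_TT hx hn ht_par q.1 j]
        by_cases hq : q.1 = j <;> simp [hq] <;> ring
      rw [Finset.sum_congr rfl (fun q _ => h4 q), Fintype.sum_prod_type]
      rw [Finset.sum_eq_single j (fun b _ hb => by simp [hb]) (fun h => absurd (Finset.mem_univ j) h)]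
      have := congrFun (hd j) y
      simp only [Finset.sum_apply, Pi.smul_apply, smul_eq_mul] at this
      simp only [eq_self_iff_true, if_true]
      rw [this, sub_self]
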